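/- Let H be a finite-dimensional Hopf algebra over a field k with nonzero left integral t, let A be a unital k-algebra with a symmetric partial action of H such that h·1_A is central, let ρ̄ : A → A ⊗ H* be the induced partial H*-comodule structure, and suppose the canonical map can : A ⊗_{A^{\underline{H}}} A → (A ⊗ H*)ρ̄(1_A), can(a ⊗ b) = (a ⊗ 1)ρ̄(b), is surjective. Then: (i) there exist a₁,…,aₙ and b₁,…,bₙ in A such that each map φᵢ : A → A^{\underline{H}}, φᵢ(a) = t·(bᵢa), is a right A^{\underline{H}}-module map and a = Σᵢ aᵢ φᵢ(a) for every a ∈ A; consequently A is a finitely generated projective right A^{\underline{H}}-module; (ii) the map can is bijective. -/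

import Mathlib

set_option synthInstance.maxHeartbeats 1000000
set_option maxHeartbeats 1000000


open TensorProduct

/-- A partial action of a Hopf algebra `H` on a unital `k`-algebra `A`:
a linear map `act : H →ₗ[k] A →ₗ[k] A`, `h ⊗ a ↦ h · a`, such that
(i) `h·(ab) = Σ (h₁·a)(h₂·b)`, (ii) `1·a = a`, and
(iii) `h·(g·a) = Σ (h₁·1)((h₂ g)·a)`. -/
structure PartialAction (k H A : Type*) [CommSemiring k] [Semiring H] [HopfAlgebra k H]
    [Semiring A] [Algebra k A] where
  act : H →ₗ[k] A →ₗ[k] A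
  one_act : ∀ a : A, act 1 a = a
  act_mul : ∀ (h : H) (a b : A),
    act h (a * b) = LinearMap.mul' k A
      (TensorProduct.map (act.flip a) (act.flip b) (Coalgebra.comul h))
  act_act : ∀ (h g : H) (a : A),
    act h (act g a) = LinearMap.mul' k A
      (TensorProduct.map (act.flip 1) ((act.flip a) ∘ₗ LinearMap.mulRight k g)
        (Coalgebra.comul h))

variable {k H A : Type*} [Field k] [Ring H] [HopfAlgebra k H] [Ring A] [Algebra k A]

/-- The induced partial `H*`-comodule structure `ρ(a) = Σᵢ (hᵢ·a) ⊗ hᵢ*` on `A`,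
for a basis `{hᵢ}` of `H` with dual basis `{hᵢ*}`. -/
noncomputable def inducedCoaction (α : PartialAction k H A) {ι : Type*} [Fintype ι]
    (bH : Module.Basis ι k H) : A →ₗ[k] A ⊗[k] (Module.Dual k H) :=
  ∑ i : ι, ((TensorProduct.mk k A (Module.Dual k H)).flip (bH.coord i)) ∘ₗ (α.act (bH i))

/-- The canonical map `can : A ⊗ A → A ⊗ H*`, `a ⊗ b ↦ (a ⊗ 1)ρ(b) = Σ a b⁽⁰⁾ ⊗ b⁽¹⁾`. -/
noncomputable def canMap (α : PartialAction k H A) {ι : Type*} [Fintype ι]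
    (bH : Module.Basis ι k H) : (A ⊗[k] A) →ₗ[k] A ⊗[k] (Module.Dual k H) :=
  (TensorProduct.map (LinearMap.mul' k A) LinearMap.id) ∘ₗ
    (TensorProduct.assoc k A A (Module.Dual k H)).symm.toLinearMap ∘ₗ
    (TensorProduct.map LinearMap.id (inducedCoaction α bH))

/-- The convolution product on `H* = Module.Dual k H`: `(f * g)(h) = Σ f(h₁)g(h₂)`. -/
noncomputable def conv (f g : Module.Dual k H) : Module.Dual k H :=
  (LinearMap.mul' k k) ∘ₗ (TensorProduct.map f g) ∘ₗ Coalgebra.comul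

/-- Generators of `(A ⊗ H*)ρ(1)`, the codomain of the canonical map:
the elements `(a ⊗ f)·ρ(1) = Σᵢ (a(hᵢ·1)) ⊗ f·hᵢ*`. -/
noncomputable def galoisTarget (α : PartialAction k H A) {ι : Type*} [Fintype ι]
    (bH : Module.Basis ι k H) : Set (A ⊗[k] (Module.Dual k H)) :=
  {y | ∃ (a : A) (f : Module.Dual k H),
    y = ∑ i : ι, (a * α.act (bH i) 1) ⊗ₜ[k] conv f (bH.coord i)}

/-- The kernel of the projection `A ⊗_k A → A ⊗_{A^{\underline{H}}} A`:
the span of the elements `ac ⊗ b - a ⊗ cb` with `c ∈ A^{\underline{H}}`. -/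
noncomputable def balancedRel (α : PartialAction k H A) : Submodule k (A ⊗[k] A) :=
  Submodule.span k {x : A ⊗[k] A | ∃ a b c : A,
    (∀ h : H, α.act h c = c * α.act h 1) ∧ x = (a * c) ⊗ₜ[k] b - a ⊗ₜ[k] (c * b)}


section Aux
open TensorProduct LinearMap Coalgebra HopfAlgebra

variable {k H A : Type*} [Field k] [Ring H] [HopfAlgebra k H] [Ring A] [Algebra k A]


lemma lid_map_move (f : H →ₗ[k] k) (g : H →ₗ[k] A) (z : H ⊗[k] H) :
    (TensorProduct.lid k A) (TensorProduct.map f g z) =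
      g ((TensorProduct.lid k H) (TensorProduct.map f LinearMap.id z)) := by
  induction z using TensorProduct.induction_on with
  | zero => simp
  | tmul u v => simp
  | add x y hx hy => simp [map_add, hx, hy]

lemma lid_map_counit (q : H →ₗ[k] A) (h : H) :
    (TensorProduct.lid k A) (TensorProduct.map Coalgebra.counit q (Coalgebra.comul h)) = q h := by
  rw [lid_map_move]
  have : TensorProduct.map (Coalgebra.counit (R := k) (A := H)) LinearMap.id
      = LinearMap.rTensor H Coalgebra.counit := rfl
  rw [this, Coalgebra.rTensor_counit_comul]
  simp

lemma rid_map_move (g : H →ₗ[k] A) (f : H →ₗ[k] k) (z : H ⊗[k] H) :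
    (TensorProduct.rid k A) (TensorProduct.map g f z) =
      g ((TensorProduct.rid k H) (TensorProduct.map LinearMap.id f z)) := by
  induction z using TensorProduct.induction_on with
  | zero => simp
  | tmul u v => simp
  | add x y hx hy => simp [map_add, hx, hy]

lemma rid_map_counit (q : H →ₗ[k] A) (h : H) :
    (TensorProduct.rid k A) (TensorProduct.map q Coalgebra.counit (Coalgebra.comul h)) = q h := by
  rw [rid_map_move]
  have : TensorProduct.map LinearMap.id (Coalgebra.counit (R := k) (A := H))
      = LinearMap.lTensor H Coalgebra.counit := rfl
  rw [this, Coalgebra.lTensor_counit_comul]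
  simp


-- (1 ⊗ h) * z = lTensor (mulLeft h) z
lemma one_tmul_mul (h : H) (z : H ⊗[k] H) :
    ((1 : H) ⊗ₜ[k] h) * z = LinearMap.lTensor H (LinearMap.mulLeft k h) z := by
  induction z using TensorProduct.induction_on with
  | zero => simp
  | tmul u v => simp [Algebra.TensorProduct.tmul_mul_tmul]
  | add x y hx hy => simp [mul_add, hx, hy]

lemma tmul_one_mul (w : H) (z : H ⊗[k] H) :
    (w ⊗ₜ[k] (1 : H)) * z = LinearMap.rTensor H (LinearMap.mulLeft k w) z := by
  induction z using TensorProduct.induction_on with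
  | zero => simp
  | tmul u v => simp [Algebra.TensorProduct.tmul_mul_tmul]
  | add x y hx hy => simp [mul_add, hx, hy]

lemma key_integral (t : H) (hint : ∀ h : H, h * t = (Coalgebra.counit (R := k) h) • t) (h : H) :
    LinearMap.lTensor H (LinearMap.mulLeft k h) (Coalgebra.comul (R := k) t) =
    LinearMap.rTensor H (LinearMap.mulLeft k (antipode (R := k) h)) (Coalgebra.comul t) := by
  set D : H →ₗ[k] H ⊗[k] H := Coalgebra.comul with hD
  set μ₂ : (H ⊗[k] H) ⊗[k] (H ⊗[k] H) →ₗ[k] H ⊗[k] H := LinearMap.mul' k (H ⊗[k] H) with hμ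
  set ψ₁ : H →ₗ[k] H ⊗[k] H :=
    ((TensorProduct.mk k H H).flip 1) ∘ₗ (antipode (R := k)) with hψ₁
  set ψ₂ : H →ₗ[k] H ⊗[k] H := D ∘ₗ LinearMap.mulRight k t with hψ₂
  have hψ₁app : ∀ u : H, ψ₁ u = antipode (R := k) u ⊗ₜ[k] 1 := fun u => rfl
  -- evaluation A
  have eA : μ₂ (TensorProduct.map ψ₁ ψ₂ (D h)) = (antipode (R := k) h ⊗ₜ[k] (1:H)) * D t := by
    have hsm : ψ₂ = (Coalgebra.counit (R := k)).smulRight (D t) := by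
      ext u; simp [hψ₂, hint u]
    rw [hsm]
    have gen : ∀ z : H ⊗[k] H, μ₂ (TensorProduct.map ψ₁
        ((Coalgebra.counit (R := k)).smulRight (D t)) z) =
        (ψ₁ ((TensorProduct.rid k H) (TensorProduct.map LinearMap.id Coalgebra.counit z))) * D t := by
      intro z
      induction z using TensorProduct.induction_on with
      | zero => simp
      | tmul u v =>
          simp [hμ, smul_mul_assoc, mul_smul_comm, TensorProduct.smul_tmul', map_smul]
      | add x y hx hy => simp [map_add, hx, hy, add_mul]
    rw [gen]
    have : TensorProduct.map LinearMap.id (Coalgebra.counit (R := k) (A := H))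
        = LinearMap.lTensor H Coalgebra.counit := rfl
    rw [this, Coalgebra.lTensor_counit_comul]
    simp [hψ₁app]
  -- evaluation B
  have eB : μ₂ (TensorProduct.map ψ₁ ψ₂ (D h)) = ((1:H) ⊗ₜ[k] h) * D t := by
    have hmul : ψ₂ = (LinearMap.mulRight k (D t)) ∘ₗ D := by
      ext u; simp [hψ₂, hD, Bialgebra.comul_mul]
    rw [hmul]
    have gen : ∀ z : H ⊗[k] H, μ₂ (TensorProduct.map ψ₁ ((LinearMap.mulRight k (D t)) ∘ₗ D) z)
        = μ₂ (TensorProduct.map ψ₁ D z) * D t := by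
      intro z
      induction z using TensorProduct.induction_on with
      | zero => simp
      | tmul u v => simp [hμ, mul_assoc]
      | add x y hx hy => simp [map_add, hx, hy, add_mul]
    rw [gen]
    have hB2 : μ₂ (TensorProduct.map ψ₁ D (D h)) = (1:H) ⊗ₜ[k] h := by
      have gen2 : ∀ z : H ⊗[k] H, μ₂ (TensorProduct.map ψ₁ D z) =
          LinearMap.rTensor H (LinearMap.mul' k H ∘ₗ LinearMap.rTensor H (antipode (R := k)))
            ((TensorProduct.assoc k H H H).symm (LinearMap.lTensor H D z)) := by
        intro z
        induction z using TensorProduct.induction_on with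
        | zero => simp
        | tmul u v =>
            have inner : ∀ w : H ⊗[k] H, (antipode (R := k) u ⊗ₜ[k] (1:H)) * w =
                LinearMap.rTensor H (LinearMap.mul' k H ∘ₗ LinearMap.rTensor H (antipode (R := k)))
                  ((TensorProduct.assoc k H H H).symm (u ⊗ₜ[k] w)) := by
              intro w
              induction w using TensorProduct.induction_on with
              | zero => simp
              | tmul p q => simp [Algebra.TensorProduct.tmul_mul_tmul]
              | add x y hx hy => simp [mul_add, hx, hy, tmul_add, map_add]
            simpa [hμ, hψ₁app] using inner (D v)
        | add x y hx hy => simp [map_add, hx, hy]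
      rw [gen2, Coalgebra.coassoc_symm_apply, ← LinearMap.rTensor_comp_apply]
      rw [LinearMap.comp_assoc, HopfAlgebra.mul_antipode_rTensor_comul]
      rw [LinearMap.rTensor_comp_apply]
      have : LinearMap.rTensor H (Coalgebra.counit (R := k) (A := H)) (D h) = (1:k) ⊗ₜ[k] h :=
        Coalgebra.rTensor_counit_comul h
      rw [this]
      simp [Algebra.linearMap_apply]
    rw [hB2]
  rw [← one_tmul_mul, ← eB, eA, tmul_one_mul]


-- generic "move a map out of the second slot" lemma
lemma lid_map_move' {M N : Type*} [AddCommMonoid M] [Module k M] [AddCommMonoid N] [Module k N]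
    (f : H →ₗ[k] k) (g : M →ₗ[k] N) (z : H ⊗[k] M) :
    (TensorProduct.lid k N) (TensorProduct.map f g z) =
      g ((TensorProduct.lid k M) (TensorProduct.map f LinearMap.id z)) := by
  induction z using TensorProduct.induction_on with
  | zero => simp
  | tmul u v => simp
  | add x y hx hy => simp [map_add, hx, hy]

lemma basis_expand {ι : Type*} [Fintype ι] (bH : Module.Basis ι k H) (z : H ⊗[k] H) :
    z = ∑ i : ι, bH i ⊗ₜ[k]
      ((TensorProduct.lid k H) (TensorProduct.map (bH.coord i) LinearMap.id z)) := by
  induction z using TensorProduct.induction_on with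
  | zero => simp
  | tmul u v =>
      simp only [TensorProduct.map_tmul, LinearMap.id_coe, id_eq, TensorProduct.lid_tmul]
      calc u ⊗ₜ[k] v = (∑ i : ι, bH.repr u i • bH i) ⊗ₜ[k] v := by rw [Module.Basis.sum_repr]
        _ = ∑ i : ι, bH i ⊗ₜ[k] (bH.coord i u • v) := by
            rw [TensorProduct.sum_tmul]
            refine Finset.sum_congr rfl fun i _ => ?_
            rw [TensorProduct.smul_tmul, Module.Basis.coord_apply]
  | add x y hx hy =>
      conv_lhs => rw [hx, hy]
      rw [← Finset.sum_add_distrib]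
      refine Finset.sum_congr rfl fun i _ => ?_
      rw [map_add, map_add, TensorProduct.tmul_add]

lemma basis_extract {ι : Type*} [Fintype ι] [DecidableEq ι] (bH : Module.Basis ι k H)
    {M : Type*} [AddCommMonoid M] [Module k M] (z : ι → M) (j : ι) :
    (TensorProduct.lid k M) (TensorProduct.map (bH.coord j) LinearMap.id
      (∑ i : ι, bH i ⊗ₜ[k] z i)) = z j := by
  rw [map_sum, map_sum, Finset.sum_eq_single j]
  · simp
  · intro i _ hij
    simp [Module.Basis.coord_apply, Module.Basis.repr_self, Finsupp.single_apply, hij]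
  · intro hj; exact absurd (Finset.mem_univ j) hj

lemma exists_integral_dual (t : H) (ht : t ≠ 0)
    (hint : ∀ h : H, h * t = (Coalgebra.counit (R := k) h) • t)
    {ι : Type*} [Fintype ι] (bH : Module.Basis ι k H) :
    ∃ f : Module.Dual k H,
      (TensorProduct.lid k H) (TensorProduct.map f LinearMap.id (Coalgebra.comul t)) = 1 := by
  classical
  set D : H →ₗ[k] H ⊗[k] H := Coalgebra.comul with hD
  set d : ι → H := fun i =>
    (TensorProduct.lid k H) (TensorProduct.map (bH.coord i) LinearMap.id (D t)) with hd
  have hDt : D t = ∑ i : ι, bH i ⊗ₜ[k] d i := basis_expand bH (D t)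
  set T : Module.Dual k H →ₗ[k] H :=
    { toFun := fun f => (TensorProduct.lid k H) (TensorProduct.map f LinearMap.id (D t))
      map_add' := fun f g => by
        beta_reduce
        rw [TensorProduct.map_add_left, LinearMap.add_apply, map_add]
      map_smul' := fun r f => by
        beta_reduce
        rw [TensorProduct.map_smul_left, LinearMap.smul_apply, map_smul, RingHom.id_apply]
        } with hT
  have hTf : ∀ f : Module.Dual k H, T f = ∑ i : ι, f (bH i) • d i := by
    intro f
    show (TensorProduct.lid k H) (TensorProduct.map f LinearMap.id (D t)) = _
    rw [hDt, map_sum, map_sum]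
    refine Finset.sum_congr rfl fun i _ => ?_
    simp
  have hdT : ∀ i, d i = T (bH.coord i) := by
    intro i
    show d i = (TensorProduct.lid k H) (TensorProduct.map (bH.coord i) LinearMap.id (D t))
    rfl
  -- the coefficient space C
  set C : Submodule k H := Submodule.span k (Set.range d) with hC
  have hdC : ∀ i, d i ∈ C := fun i => Submodule.subset_span ⟨i, rfl⟩
  -- C is a left ideal
  have hCleft : ∀ (h : H) (i : ι), h * d i ∈ C := by
    intro h j
    have key := key_integral t hint h
    have e1 : LinearMap.lTensor H (LinearMap.mulLeft k h) (D t)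
        = ∑ i : ι, bH i ⊗ₜ[k] (h * d i) := by
      rw [hDt, map_sum]; simp
    have e2 : LinearMap.rTensor H (LinearMap.mulLeft k (antipode (R := k) h)) (D t)
        = ∑ i : ι, (antipode (R := k) h * bH i) ⊗ₜ[k] d i := by
      rw [hDt, map_sum]; simp
    have : h * d j = (TensorProduct.lid k H) (TensorProduct.map (bH.coord j) LinearMap.id
        (∑ i : ι, (antipode (R := k) h * bH i) ⊗ₜ[k] d i)) := by
      rw [← e2, ← key, e1, basis_extract]
    rw [this, map_sum, map_sum]
    refine Submodule.sum_mem _ fun i _ => ?_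
    simp only [TensorProduct.map_tmul, LinearMap.id_coe, id_eq, TensorProduct.lid_tmul]
    exact Submodule.smul_mem _ _ (hdC i)
  -- a functional with f0 t = 1
  obtain ⟨f0, hf0⟩ : ∃ f0 : Module.Dual k H, f0 t = 1 := by
    have h1 : ¬ ∀ φ : Module.Dual k H, φ t = 0 := by
      intro hall; exact ht ((Module.forall_dual_apply_eq_zero_iff k t).mp hall)
    push_neg at h1
    obtain ⟨φ, hφ⟩ := h1
    exact ⟨(φ t)⁻¹ • φ, by simp [inv_mul_cancel₀ hφ]⟩
  set c : H := T f0 with hc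
  have hεbd : ∑ i : ι, (Coalgebra.counit (R := k) (d i)) • bH i = t := by
    have h2 := congrArg (fun z => (TensorProduct.rid k H)
      (TensorProduct.map (LinearMap.id (R := k) (M := H)) (Coalgebra.counit (R := k)) z)) hDt
    beta_reduce at h2
    have hl : TensorProduct.map (LinearMap.id (R := k) (M := H)) (Coalgebra.counit (R := k))
        (D t) = LinearMap.lTensor H (Coalgebra.counit (R := k)) (D t) := rfl
    rw [hl, Coalgebra.lTensor_counit_comul] at h2
    rw [map_sum] at h2
    simp only [TensorProduct.map_tmul, LinearMap.id_coe, id_eq, TensorProduct.rid_tmul] at h2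
    simpa using h2.symm
  have hεc : Coalgebra.counit (R := k) c = 1 := by
    rw [hc, hTf, map_sum]
    have : ∀ i : ι, Coalgebra.counit (R := k) (f0 (bH i) • d i)
        = f0 ((Coalgebra.counit (R := k) (d i)) • bH i) := by
      intro i
      rw [map_smul, map_smul, smul_eq_mul, smul_eq_mul, mul_comm]
    rw [Finset.sum_congr rfl fun i _ => this i, ← map_sum, hεbd, hf0]
  set e : ι → H := fun i =>
    (TensorProduct.lid k H) (TensorProduct.map f0 LinearMap.id (D (bH i))) with he
  have hDc : D c = ∑ i : ι, e i ⊗ₜ[k] d i := by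
    have h1 : D c = (TensorProduct.lid k (H ⊗[k] H))
        (TensorProduct.map f0 D (D t)) := by
      rw [lid_map_move' f0 D (D t)]
      rfl
    have h2 : TensorProduct.map f0 D
        = TensorProduct.map f0 (LinearMap.id (R := k) (M := H ⊗[k] H)) ∘ₗ
          LinearMap.lTensor H D := by
      have := TensorProduct.map_comp f0 (LinearMap.id (R := k) (M := H ⊗[k] H))
        (LinearMap.id (R := k) (M := H)) D
      rw [LinearMap.comp_id, LinearMap.id_comp] at this
      exact this
    rw [h1, h2]
    have h3 : LinearMap.lTensor H D (D t)
        = TensorProduct.assoc k H H H (LinearMap.rTensor H D (D t)) := by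
      rw [Coalgebra.coassoc_apply]
    rw [LinearMap.comp_apply, h3, hDt, map_sum, map_sum, map_sum, map_sum]
    refine Finset.sum_congr rfl fun i _ => ?_
    have h4 : ∀ (η : H ⊗[k] H) (w : H), (TensorProduct.lid k (H ⊗[k] H))
        (TensorProduct.map f0 LinearMap.id (TensorProduct.assoc k H H H (η ⊗ₜ[k] w)))
        = ((TensorProduct.lid k H) (TensorProduct.map f0 LinearMap.id η)) ⊗ₜ[k] w := by
      intro η w
      induction η using TensorProduct.induction_on with
      | zero => simp
      | tmul p q => simp [TensorProduct.smul_tmul']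
      | add x y hx hy => simp [map_add, TensorProduct.add_tmul, hx, hy]
    have h5 : LinearMap.rTensor H D (bH i ⊗ₜ[k] d i) = (D (bH i)) ⊗ₜ[k] d i := rfl
    rw [h5, h4]
  have h1C : (1 : H) ∈ C := by
    have hant := HopfAlgebra.mul_antipode_rTensor_comul_apply (R := k) c
    rw [hεc, map_one] at hant
    have hDcc : Coalgebra.comul (R := k) c = ∑ i : ι, e i ⊗ₜ[k] d i := hDc
    rw [hDcc, map_sum, map_sum] at hant
    simp only [LinearMap.rTensor_tmul, LinearMap.mul'_apply] at hant
    rw [← hant]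
    exact Submodule.sum_mem _ fun i _ => hCleft _ i
  have hCrange : C ≤ LinearMap.range T := by
    rw [hC, Submodule.span_le]
    rintro x ⟨i, rfl⟩
    exact ⟨bH.coord i, (hdT i).symm⟩
  obtain ⟨f, hf⟩ := hCrange h1C
  exact ⟨f, hf⟩
end Aux


section Aux2
open TensorProduct LinearMap Coalgebra HopfAlgebra
variable {k H A : Type*} [Field k] [Ring H] [HopfAlgebra k H] [Ring A] [Algebra k A]

/-- Evaluation map `A ⊗ H* → Hom(H, A)`. -/
noncomputable def evmap : A ⊗[k] Module.Dual k H →ₗ[k] (H →ₗ[k] A) :=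
  TensorProduct.lift (LinearMap.mk₂ k (fun (a : A) (φ : Module.Dual k H) => φ.smulRight a)
    (fun a b φ => by ext h; exact smul_add _ _ _)
    (fun r a φ => by ext h; exact smul_comm _ _ _)
    (fun φ ψ a => by
      ext h
      simp only [LinearMap.smulRight_apply, LinearMap.add_apply]
      exact add_smul _ _ _)
    (fun r φ a => by
      ext h
      simp only [LinearMap.smulRight_apply, LinearMap.add_apply, LinearMap.smul_apply,
        smul_eq_mul]
      exact mul_smul _ _ _))

@[simp] lemma evmap_tmul (a : A) (φ : Module.Dual k H) (h : H) :
    evmap (a ⊗ₜ[k] φ) h = φ h • a := rfl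

lemma evmap_rep {ι : Type*} [Fintype ι] (bH : Module.Basis ι k H) (w : A ⊗[k] Module.Dual k H) :
    w = ∑ i : ι, (evmap w (bH i)) ⊗ₜ[k] bH.coord i := by
  induction w using TensorProduct.induction_on with
  | zero => simp
  | tmul a φ =>
      classical
      have hφ : φ = ∑ i : ι, φ (bH i) • bH.coord i := by
        conv_lhs => rw [← bH.dualBasis.sum_repr φ]
        refine Finset.sum_congr rfl fun i _ => ?_
        rw [Module.Basis.dualBasis_repr]
        congr 1
        exact congrFun bH.coe_dualBasis i
      conv_lhs => rw [hφ]
      rw [TensorProduct.tmul_sum]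
      refine Finset.sum_congr rfl fun i _ => ?_
      rw [TensorProduct.tmul_smul, TensorProduct.smul_tmul', evmap_tmul]
  | add x y hx hy =>
      conv_lhs => rw [hx, hy]
      rw [← Finset.sum_add_distrib]
      refine Finset.sum_congr rfl fun i _ => ?_
      rw [map_add, LinearMap.add_apply, TensorProduct.add_tmul]

lemma evmap_inj {ι : Type*} [Fintype ι] (bH : Module.Basis ι k H)
    {w w' : A ⊗[k] Module.Dual k H} (hw : ∀ h, evmap w h = evmap w' h) : w = w' := by
  rw [evmap_rep bH w, evmap_rep bH w']
  exact Finset.sum_congr rfl fun i _ => by rw [hw]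

lemma sum_coord_smul_act (α : PartialAction k H A) {ι : Type*} [Fintype ι] (bH : Module.Basis ι k H)
    (h : H) (y : A) : ∑ i : ι, (bH.coord i h) • α.act (bH i) y = α.act h y := by
  have h1 := congrArg (fun u => α.act u y) (bH.sum_repr h)
  beta_reduce at h1
  rw [← h1, map_sum, LinearMap.sum_apply]
  exact Finset.sum_congr rfl fun i _ => by rw [map_smul, LinearMap.smul_apply, Module.Basis.coord_apply]

lemma ev_can (α : PartialAction k H A) {ι : Type*} [Fintype ι] (bH : Module.Basis ι k H)
    (x y : A) (h : H) : evmap (canMap α bH (x ⊗ₜ[k] y)) h = x * α.act h y := by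
  have hcan : canMap α bH (x ⊗ₜ[k] y)
      = ∑ i : ι, (x * α.act (bH i) y) ⊗ₜ[k] bH.coord i := by
    simp only [canMap, inducedCoaction, LinearMap.comp_apply, TensorProduct.map_tmul,
      LinearMap.id_coe, id_eq, LinearMap.sum_apply, LinearEquiv.coe_coe]
    rw [TensorProduct.tmul_sum, map_sum, map_sum]
    refine Finset.sum_congr rfl fun i _ => ?_
    simp [TensorProduct.assoc_symm_tmul, TensorProduct.mk_apply]
  rw [hcan, map_sum]
  simp only [LinearMap.sum_apply, evmap_tmul]
  rw [← sum_coord_smul_act α bH h y, Finset.mul_sum]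
  exact Finset.sum_congr rfl fun i _ => by rw [mul_smul_comm]

end Aux2


section Aux3
open TensorProduct LinearMap Coalgebra HopfAlgebra
variable {k H A : Type*} [Field k] [Ring H] [HopfAlgebra k H] [Ring A] [Algebra k A]

lemma act_one_expand (α : PartialAction k H A) (h : H) (x : A) :
    α.act h x = LinearMap.mul' k A
      (TensorProduct.map (α.act.flip 1) (α.act.flip x) (Coalgebra.comul h)) := by
  have h1 := α.act_act h 1 x
  rw [α.one_act x] at h1
  rw [h1, LinearMap.mulRight_one, LinearMap.comp_id]

-- collapse of ε-smulRight in the first slot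
lemma mul_map_smulRight_fst (c : A) (f : H →ₗ[k] A) (h : H) :
    LinearMap.mul' k A (TensorProduct.map ((Coalgebra.counit (R := k)).smulRight c) f
      (Coalgebra.comul h)) = c * f h := by
  have gen : ∀ z : H ⊗[k] H, LinearMap.mul' k A
      (TensorProduct.map ((Coalgebra.counit (R := k)).smulRight c) f z)
      = c * (TensorProduct.lid k A) (TensorProduct.map Coalgebra.counit f z) := by
    intro z
    induction z using TensorProduct.induction_on with
    | zero => simp
    | tmul u v => simp [TensorProduct.smul_tmul', mul_smul_comm]
    | add x y hx hy => simp [map_add, hx, hy, mul_add]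
  rw [gen, lid_map_counit]

-- collapse of ε-smulRight in the second slot
lemma mul_map_smulRight_snd (c : A) (f : H →ₗ[k] A) (h : H) :
    LinearMap.mul' k A (TensorProduct.map f ((Coalgebra.counit (R := k)).smulRight c)
      (Coalgebra.comul h)) = f h * c := by
  have gen : ∀ z : H ⊗[k] H, LinearMap.mul' k A
      (TensorProduct.map f ((Coalgebra.counit (R := k)).smulRight c) z)
      = (TensorProduct.rid k A) (TensorProduct.map f Coalgebra.counit z) * c := by
    intro z
    induction z using TensorProduct.induction_on with
    | zero => simp
    | tmul u v => simp [TensorProduct.smul_tmul', smul_mul_assoc, mul_smul_comm]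
    | add x y hx hy => simp [map_add, hx, hy, add_mul]
  rw [gen, rid_map_counit]

-- bullet (i).1 : the trace lands in the invariants
lemma trace_invariant (α : PartialAction k H A)
    (hsymm : ∀ (h g : H) (a : A),
      α.act h (α.act g a) = LinearMap.mul' k A
        (TensorProduct.map ((α.act.flip a) ∘ₗ LinearMap.mulRight k g) (α.act.flip 1)
          (Coalgebra.comul h)))
    (t : H) (hint : ∀ h : H, h * t = (Coalgebra.counit (R := k) h) • t)
    (z : A) (h : H) : α.act h (α.act t z) = α.act t z * α.act h 1 := by
  rw [hsymm h t z]
  have hmap : (α.act.flip z) ∘ₗ LinearMap.mulRight k t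
      = (Coalgebra.counit (R := k)).smulRight (α.act t z) := by
    ext g
    simp only [LinearMap.comp_apply, LinearMap.mulRight_apply, LinearMap.flip_apply,
      LinearMap.smulRight_apply]
    rw [hint g, map_smul, LinearMap.smul_apply]
  rw [hmap, mul_map_smulRight_fst]
  rfl

-- central invariants move through the action in the second slot
lemma mul_map_invariant_snd (α : PartialAction k H A)
    (hcentral : ∀ (h : H) (a : A), (α.act h 1) * a = a * (α.act h 1))
    {c : A} (hc : ∀ h : H, α.act h c = c * α.act h 1)
    (f : H →ₗ[k] A) (z : H ⊗[k] H) :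
    LinearMap.mul' k A (TensorProduct.map f (α.act.flip c) z)
      = LinearMap.mul' k A (TensorProduct.map f (α.act.flip 1) z) * c := by
  induction z using TensorProduct.induction_on with
  | zero => simp
  | tmul u v =>
      simp only [TensorProduct.map_tmul, LinearMap.mul'_apply, LinearMap.flip_apply]
      rw [hc v, ← hcentral v c, ← mul_assoc]
  | add x y hx hy => simp [map_add, hx, hy, add_mul]

-- bullet (i).2 : the trace is right A^H-linear
lemma trace_Blinear (α : PartialAction k H A)
    (hcentral : ∀ (h : H) (a : A), (α.act h 1) * a = a * (α.act h 1))
    (t : H) {c : A} (hc : ∀ h : H, α.act h c = c * α.act h 1)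
    (z : A) : α.act t (z * c) = α.act t z * c := by
  rw [α.act_mul t z c, mul_map_invariant_snd α hcentral hc, ← α.act_mul t z 1, mul_one]

-- invariants pull out of the action on a product
lemma act_invariant_mul (α : PartialAction k H A)
    {c : A} (hc : ∀ h : H, α.act h c = c * α.act h 1)
    (b : A) (h : H) : α.act h (c * b) = c * α.act h b := by
  rw [α.act_mul h c b]
  have hmap : (α.act.flip c) = (LinearMap.mulLeft k c) ∘ₗ (α.act.flip 1) := by
    ext g; simp [hc g]
  rw [hmap]
  have gen : ∀ z : H ⊗[k] H, LinearMap.mul' k A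
      (TensorProduct.map ((LinearMap.mulLeft k c) ∘ₗ (α.act.flip 1)) (α.act.flip b) z)
      = c * LinearMap.mul' k A (TensorProduct.map (α.act.flip 1) (α.act.flip b) z) := by
    intro z
    induction z using TensorProduct.induction_on with
    | zero => simp
    | tmul u v => simp [mul_assoc]
    | add x y hx hy => simp [map_add, hx, hy, mul_add]
  rw [gen, ← act_one_expand]

end Aux3


section Aux4
open TensorProduct LinearMap Coalgebra HopfAlgebra
variable {k H A : Type*} [Field k] [Ring H] [HopfAlgebra k H] [Ring A] [Algebra k A]

lemma inner_collapse (α : PartialAction k H A) (y : A) (v : H) :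
    TensorProduct.lift α.act (LinearMap.lTensor H
      ((α.act.flip y) ∘ₗ HopfAlgebra.antipode (R := k)) (Coalgebra.comul v))
    = α.act v 1 * y := by
  set S : H →ₗ[k] H := HopfAlgebra.antipode (R := k) with hS
  set D : H →ₗ[k] H ⊗[k] H := Coalgebra.comul with hDD
  set inner2 : H ⊗[k] H →ₗ[k] A :=
    (α.act.flip y) ∘ₗ (LinearMap.mul' k H) ∘ₗ (LinearMap.lTensor H S) with hinner2
  set Θ₂ : (H ⊗[k] H) ⊗[k] H →ₗ[k] A :=
    (LinearMap.mul' k A) ∘ₗ (TensorProduct.map (α.act.flip 1) inner2) ∘ₗ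
      (TensorProduct.assoc k H H H).toLinearMap with hΘ₂
  have step1 : ∀ z : H ⊗[k] H,
      TensorProduct.lift α.act (LinearMap.lTensor H ((α.act.flip y) ∘ₗ S) z)
      = Θ₂ (LinearMap.rTensor H D z) := by
    intro z
    induction z using TensorProduct.induction_on with
    | zero => simp
    | tmul u w =>
        have lhs : TensorProduct.lift α.act (LinearMap.lTensor H ((α.act.flip y) ∘ₗ S)
            (u ⊗ₜ[k] w)) = α.act u (α.act (S w) y) := by
          simp [LinearMap.lTensor_tmul]
        rw [lhs, α.act_act u (S w) y]
        have sub : ∀ η : H ⊗[k] H, Θ₂ (η ⊗ₜ[k] w)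
            = LinearMap.mul' k A (TensorProduct.map (α.act.flip 1)
              ((α.act.flip y) ∘ₗ LinearMap.mulRight k (S w)) η) := by
          intro η
          induction η using TensorProduct.induction_on with
          | zero => simp [TensorProduct.zero_tmul]
          | tmul p q =>
              simp [hΘ₂, hinner2, TensorProduct.assoc_tmul]
          | add x₁ x₂ h₁ h₂ =>
              rw [TensorProduct.add_tmul, map_add, h₁, h₂, ← map_add, ← map_add]
        rw [LinearMap.rTensor_tmul, sub]
    | add x₁ x₂ h₁ h₂ => rw [map_add, map_add, h₁, h₂, ← map_add, ← map_add]
  have step2 : LinearMap.rTensor H D (D v)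
      = (TensorProduct.assoc k H H H).symm (LinearMap.lTensor H D (D v)) :=
    (Coalgebra.coassoc_symm_apply v).symm
  rw [step1, step2]
  have step3 : ∀ ζ : H ⊗[k] (H ⊗[k] H), Θ₂ ((TensorProduct.assoc k H H H).symm ζ)
      = LinearMap.mul' k A (TensorProduct.map (α.act.flip 1) inner2 ζ) := by
    intro ζ
    simp [hΘ₂, LinearEquiv.apply_symm_apply]
  rw [step3]
  have step4 : TensorProduct.map (α.act.flip 1) inner2 (LinearMap.lTensor H D (D v))
      = TensorProduct.map (α.act.flip 1) (inner2 ∘ₗ D) (D v) := by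
    have : TensorProduct.map (α.act.flip 1) (inner2 ∘ₗ D)
        = (TensorProduct.map (α.act.flip 1) inner2) ∘ₗ (LinearMap.lTensor H D) := by
      have h1 := TensorProduct.map_comp (α.act.flip 1) inner2
        (LinearMap.id (R := k) (M := H)) D
      rw [LinearMap.comp_id] at h1
      exact h1
    rw [this, LinearMap.comp_apply]
  rw [step4]
  have step5 : inner2 ∘ₗ D = (Coalgebra.counit (R := k)).smulRight y := by
    have h1 : inner2 ∘ₗ D = (α.act.flip y) ∘ₗ
        ((LinearMap.mul' k H) ∘ₗ (LinearMap.lTensor H S) ∘ₗ D) := by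
      rw [hinner2]; rfl
    rw [h1, hS, hDD, HopfAlgebra.mul_antipode_lTensor_comul]
    ext h
    simp only [LinearMap.comp_apply, Algebra.linearMap_apply, LinearMap.flip_apply,
      LinearMap.smulRight_apply, Algebra.algebraMap_eq_smul_one]
    rw [map_smul, LinearMap.smul_apply, α.one_act]
  rw [step5, mul_map_smulRight_snd]
  rfl

lemma act_mul_expand (α : PartialAction k H A) (x y : A) (g : H) :
    α.act g x * y = TensorProduct.lift α.act (LinearMap.lTensor H
      (((LinearMap.mulLeft k x) ∘ₗ (α.act.flip y)) ∘ₗ HopfAlgebra.antipode (R := k))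
      (Coalgebra.comul g)) := by
  set S : H →ₗ[k] H := HopfAlgebra.antipode (R := k) with hS
  set D : H →ₗ[k] H ⊗[k] H := Coalgebra.comul with hDD
  set innerMap : H ⊗[k] H →ₗ[k] A :=
    (TensorProduct.lift α.act) ∘ₗ (LinearMap.lTensor H ((α.act.flip y) ∘ₗ S)) with hinner
  set Φ₂ : (H ⊗[k] H) ⊗[k] H →ₗ[k] A :=
    (LinearMap.mul' k A) ∘ₗ (TensorProduct.map (α.act.flip x) innerMap) ∘ₗ
      (TensorProduct.assoc k H H H).toLinearMap with hΦ₂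
  have step1 : ∀ z : H ⊗[k] H,
      TensorProduct.lift α.act (LinearMap.lTensor H
        (((LinearMap.mulLeft k x) ∘ₗ (α.act.flip y)) ∘ₗ S) z)
      = Φ₂ (LinearMap.rTensor H D z) := by
    intro z
    induction z using TensorProduct.induction_on with
    | zero => simp
    | tmul u v =>
        have lhs : TensorProduct.lift α.act (LinearMap.lTensor H
            (((LinearMap.mulLeft k x) ∘ₗ (α.act.flip y)) ∘ₗ S) (u ⊗ₜ[k] v))
            = α.act u (x * α.act (S v) y) := by
          simp [LinearMap.lTensor_tmul]
        rw [lhs, α.act_mul u x (α.act (S v) y)]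
        have sub : ∀ η : H ⊗[k] H, Φ₂ (η ⊗ₜ[k] v)
            = LinearMap.mul' k A (TensorProduct.map (α.act.flip x)
              (α.act.flip (α.act (S v) y)) η) := by
          intro η
          induction η using TensorProduct.induction_on with
          | zero => simp [TensorProduct.zero_tmul]
          | tmul p q =>
              simp [hΦ₂, hinner, TensorProduct.assoc_tmul, LinearMap.lTensor_tmul]
          | add x₁ x₂ h₁ h₂ =>
              rw [TensorProduct.add_tmul, map_add, h₁, h₂, ← map_add, ← map_add]
        rw [LinearMap.rTensor_tmul, sub]
    | add x₁ x₂ h₁ h₂ => rw [map_add, map_add, h₁, h₂, ← map_add, ← map_add]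
  have step2 : LinearMap.rTensor H D (D g)
      = (TensorProduct.assoc k H H H).symm (LinearMap.lTensor H D (D g)) :=
    (Coalgebra.coassoc_symm_apply g).symm
  rw [step1, step2]
  have step3 : ∀ ζ : H ⊗[k] (H ⊗[k] H), Φ₂ ((TensorProduct.assoc k H H H).symm ζ)
      = LinearMap.mul' k A (TensorProduct.map (α.act.flip x) innerMap ζ) := by
    intro ζ
    simp [hΦ₂, LinearEquiv.apply_symm_apply]
  rw [step3]
  have step4 : TensorProduct.map (α.act.flip x) innerMap (LinearMap.lTensor H D (D g))
      = TensorProduct.map (α.act.flip x) (innerMap ∘ₗ D) (D g) := by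
    have h2 : TensorProduct.map (α.act.flip x) (innerMap ∘ₗ D)
        = (TensorProduct.map (α.act.flip x) innerMap) ∘ₗ (LinearMap.lTensor H D) := by
      have h1 := TensorProduct.map_comp (α.act.flip x) innerMap
        (LinearMap.id (R := k) (M := H)) D
      rw [LinearMap.comp_id] at h1
      exact h1
    rw [h2, LinearMap.comp_apply]
  rw [step4]
  have step5 : innerMap ∘ₗ D = (LinearMap.mulRight k y) ∘ₗ (α.act.flip 1) := by
    ext v
    simp only [LinearMap.comp_apply, LinearMap.mulRight_apply, LinearMap.flip_apply]
    exact inner_collapse α y v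
  rw [step5]
  have step6 : ∀ z : H ⊗[k] H, LinearMap.mul' k A (TensorProduct.map (α.act.flip x)
      ((LinearMap.mulRight k y) ∘ₗ (α.act.flip 1)) z)
      = LinearMap.mul' k A (TensorProduct.map (α.act.flip x) (α.act.flip 1) z) * y := by
    intro z
    induction z using TensorProduct.induction_on with
    | zero => simp
    | tmul u v => simp [mul_assoc]
    | add x₁ x₂ h₁ h₂ => rw [map_add, map_add, h₁, h₂, map_add, map_add, add_mul]
  rw [step6, ← α.act_mul g x 1, mul_one]

end Aux4


section Aux5
open TensorProduct LinearMap Coalgebra HopfAlgebra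
variable {k H A : Type*} [Field k] [Ring H] [HopfAlgebra k H] [Ring A] [Algebra k A]

lemma ev_target (α : PartialAction k H A) {ι : Type*} [Fintype ι] (bH : Module.Basis ι k H)
    (a : A) (f : Module.Dual k H) (h : H) :
    evmap (∑ i : ι, (a * α.act (bH i) 1) ⊗ₜ[k] conv f (bH.coord i)) h
      = a * (TensorProduct.lid k A)
          (TensorProduct.map f (α.act.flip 1) (Coalgebra.comul h)) := by
  rw [map_sum, LinearMap.sum_apply]
  simp only [evmap_tmul]
  have hconv : ∀ (g : Module.Dual k H), conv f g h
      = LinearMap.mul' k k (TensorProduct.map f g (Coalgebra.comul h)) := fun g => rfl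
  simp only [hconv]
  have gen : ∀ z : H ⊗[k] H,
      ∑ i : ι, (LinearMap.mul' k k (TensorProduct.map f (bH.coord i) z)) • (a * α.act (bH i) 1)
      = a * (TensorProduct.lid k A) (TensorProduct.map f (α.act.flip 1) z) := by
    intro z
    induction z using TensorProduct.induction_on with
    | zero => simp
    | tmul u v =>
        simp only [TensorProduct.map_tmul, LinearMap.mul'_apply, TensorProduct.lid_tmul,
          smul_eq_mul, LinearMap.flip_apply]
        rw [← sum_coord_smul_act α bH v 1, Finset.smul_sum, Finset.mul_sum]
        refine Finset.sum_congr rfl fun i _ => ?_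
        rw [mul_smul, mul_smul_comm, mul_smul_comm]
    | add x y hx hy =>
        simp only [map_add, add_smul, mul_add]
        rw [Finset.sum_add_distrib, hx, hy]
  exact gen (Coalgebra.comul h)

lemma sum_act_lid (α : PartialAction k H A) {ι : Type*} [Fintype ι] (bH : Module.Basis ι k H)
    (y : A) (h : H) :
    ∑ i : ι, (α.act (bH i) y) * ((TensorProduct.lid k A)
      (TensorProduct.map (bH.coord i) (α.act.flip 1) (Coalgebra.comul h)))
    = α.act h y := by
  have gen : ∀ z : H ⊗[k] H,
      ∑ i : ι, (α.act (bH i) y) * ((TensorProduct.lid k A)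
        (TensorProduct.map (bH.coord i) (α.act.flip 1) z))
      = LinearMap.mul' k A (TensorProduct.map (α.act.flip y) (α.act.flip 1) z) := by
    intro z
    induction z using TensorProduct.induction_on with
    | zero => simp
    | tmul u v =>
        simp only [TensorProduct.map_tmul, TensorProduct.lid_tmul, LinearMap.mul'_apply,
          LinearMap.flip_apply]
        rw [← sum_coord_smul_act α bH u y, Finset.sum_mul]
        refine Finset.sum_congr rfl fun i _ => ?_
        rw [mul_smul_comm, smul_mul_assoc]
    | add x₁ x₂ h₁ h₂ =>
        simp only [map_add, mul_add]
        rw [Finset.sum_add_distrib, h₁, h₂]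
  rw [gen (Coalgebra.comul h), ← α.act_mul h y 1, mul_one]

lemma sum_mul_expand (α : PartialAction k H A) {n : ℕ} (aa bb : Fin n → A)
    (g : H →ₗ[k] A) (z : H ⊗[k] H) :
    ∑ j : Fin n, aa j * (LinearMap.mul' k A
      (TensorProduct.map (α.act.flip (bb j)) g z))
    = LinearMap.mul' k A (TensorProduct.map
        (∑ j : Fin n, (LinearMap.mulLeft k (aa j)) ∘ₗ (α.act.flip (bb j))) g z) := by
  induction z using TensorProduct.induction_on with
  | zero => simp
  | tmul u v =>
      simp only [TensorProduct.map_tmul, LinearMap.mul'_apply, LinearMap.sum_apply,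
        LinearMap.comp_apply, LinearMap.mulLeft_apply, LinearMap.flip_apply, Finset.sum_mul]
      exact Finset.sum_congr rfl fun j _ => (mul_assoc _ _ _).symm
  | add x₁ x₂ h₁ h₂ =>
      simp only [map_add, mul_add]
      rw [Finset.sum_add_distrib, h₁, h₂]

lemma evmap_zero_eq (α : PartialAction k H A) {ι : Type*} [Fintype ι] (bH : Module.Basis ι k H)
    {w : A ⊗[k] Module.Dual k H} (h0 : ∀ h, evmap w h = 0) : w = 0 := by
  have : ∀ h : H, evmap w h = evmap (0 : A ⊗[k] Module.Dual k H) h := by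
    intro h; rw [h0 h, map_zero]; rfl
  exact evmap_inj bH this

lemma lTensor_sum_apply {P : Type*} (sw : Finset P) (G : P → (H →ₗ[k] A)) (z : H ⊗[k] H) :
    LinearMap.lTensor H (∑ p ∈ sw, G p) z = ∑ p ∈ sw, LinearMap.lTensor H (G p) z := by
  induction z using TensorProduct.induction_on with
  | zero => simp
  | tmul u v =>
      simp [LinearMap.lTensor_tmul, LinearMap.sum_apply, TensorProduct.tmul_sum]
  | add x y hx hy =>
      simp only [map_add]
      rw [hx, hy, ← Finset.sum_add_distrib]

lemma act_mul_expand_sum (α : PartialAction k H A) {P : Type*} (sw : Finset P)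
    (xs ys : P → A) (g : H)
    (hF : (∑ p ∈ sw, (LinearMap.mulLeft k (xs p)) ∘ₗ (α.act.flip (ys p))) = 0) :
    ∑ p ∈ sw, α.act g (xs p) * ys p = 0 := by
  have e1 : ∀ p ∈ sw, α.act g (xs p) * ys p
      = TensorProduct.lift α.act (LinearMap.lTensor H
          (((LinearMap.mulLeft k (xs p)) ∘ₗ (α.act.flip (ys p))) ∘ₗ
            HopfAlgebra.antipode (R := k)) (Coalgebra.comul g)) :=
    fun p _ => act_mul_expand α (xs p) (ys p) g
  rw [Finset.sum_congr rfl e1, ← map_sum, ← lTensor_sum_apply]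
  have e2 : ∑ p ∈ sw, ((LinearMap.mulLeft k (xs p)) ∘ₗ (α.act.flip (ys p))) ∘ₗ
      HopfAlgebra.antipode (R := k)
      = (∑ p ∈ sw, (LinearMap.mulLeft k (xs p)) ∘ₗ (α.act.flip (ys p))) ∘ₗ
        HopfAlgebra.antipode (R := k) := by
    ext h
    simp [LinearMap.sum_apply]
  rw [e2, hF]
  simp

end Aux5

/-- if `H` is finite-dimensional with nonzero left integral `t`, `A` carries
a symmetric partial action of `H` with each `h·1` central, and the canonical map
`can : A ⊗_{A^{\underline{H}}} A → (A ⊗ H*)ρ(1)` is surjective, then (i) there exist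
`a₁,…,aₙ, b₁,…,bₙ ∈ A` such that each `φⱼ(x) = t·(bⱼx)` is a right
`A^{\underline{H}}`-module map into `A^{\underline{H}}` and `x = Σⱼ aⱼφⱼ(x)` — a dual
(projective) basis exhibiting `A` as a finitely generated projective right
`A^{\underline{H}}`-module — and (ii) `can` is bijective (i.e. its kernel on `A ⊗_k A`
is exactly the span of the `A^{\underline{H}}`-balancing relations, and its range is all
of `(A ⊗ H*)ρ(1)`). -/
theorem canonical_map_surjective_implies_bijective
    [FiniteDimensional k H] (α : PartialAction k H A)
    (hsymm : ∀ (h g : H) (a : A),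
      α.act h (α.act g a) = LinearMap.mul' k A
        (TensorProduct.map ((α.act.flip a) ∘ₗ LinearMap.mulRight k g) (α.act.flip 1)
          (Coalgebra.comul h)))
    (hcentral : ∀ (h : H) (a : A), (α.act h 1) * a = a * (α.act h 1))
    (t : H) (ht : t ≠ 0) (hint : ∀ h : H, h * t = (Coalgebra.counit (R := k) h) • t)
    {ι : Type*} [Fintype ι] (bH : Module.Basis ι k H)
    -- the canonical map is surjective onto `(A ⊗ H*)ρ(1)`
    (hsurj : Submodule.span k (galoisTarget α bH) ≤ LinearMap.range (canMap α bH)) :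
    -- (i) a finite projective (dual) basis for `A` over `A^{\underline{H}}`
    ((∃ (n : ℕ) (aa bb : Fin n → A),
      (∀ (j : Fin n) (x : A) (h : H),
        α.act h (α.act t (bb j * x)) = (α.act t (bb j * x)) * α.act h 1) ∧
      (∀ (j : Fin n) (x c : A), (∀ h : H, α.act h c = c * α.act h 1) →
        α.act t (bb j * (x * c)) = (α.act t (bb j * x)) * c) ∧
      (∀ x : A, x = ∑ j : Fin n, aa j * α.act t (bb j * x)))) ∧
    -- (ii) `can` is bijective
    (LinearMap.ker (canMap α bH) = balancedRel α ∧
      LinearMap.range (canMap α bH) = Submodule.span k (galoisTarget α bH)) := by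
  classical
  obtain ⟨f1, hf1⟩ := exists_integral_dual t ht hint bH
  have hy1mem : (∑ i : ι, ((1:A) * α.act (bH i) 1) ⊗ₜ[k] conv f1 (bH.coord i))
      ∈ Submodule.span k (galoisTarget α bH) :=
    Submodule.subset_span ⟨1, f1, rfl⟩
  obtain ⟨u, hu⟩ := hsurj hy1mem
  obtain ⟨s, hs⟩ := TensorProduct.exists_finset u
  set n := s.card with hn
  set q : Fin n ≃ {x // x ∈ s} := s.equivFin.symm with hq
  set aa : Fin n → A := fun j => ((q j : A × A)).1 with haa
  set bb : Fin n → A := fun j => ((q j : A × A)).2 with hbb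
  have hu' : u = ∑ j : Fin n, aa j ⊗ₜ[k] bb j := by
    have h1 : ∑ j : Fin n, aa j ⊗ₜ[k] bb j
        = ∑ x : {x // x ∈ s}, ((x : A × A).1 ⊗ₜ[k] (x : A × A).2) := by
      simp only [haa, hbb]
      exact Equiv.sum_comp q fun x => ((x : A × A).1 ⊗ₜ[k] (x : A × A).2)
    rw [hs, h1]
    exact (Finset.sum_coe_sort s (fun p => p.1 ⊗ₜ[k] p.2)).symm
  set Q : H →ₗ[k] A :=
    ∑ j : Fin n, (LinearMap.mulLeft k (aa j)) ∘ₗ (α.act.flip (bb j)) with hQdef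
  have hQev : ∀ h : H, Q h = evmap (canMap α bH u) h := by
    intro h
    rw [hu', map_sum, map_sum, hQdef]
    simp only [LinearMap.sum_apply]
    refine Finset.sum_congr rfl fun j _ => ?_
    rw [ev_can α bH (aa j) (bb j) h]
    rfl
  set L : H ⊗[k] H →ₗ[k] A :=
    (TensorProduct.lid k A).toLinearMap ∘ₗ (TensorProduct.map f1 (α.act.flip 1)) with hL
  have hQR : Q = L ∘ₗ (Coalgebra.comul (R := k) (A := H)) := by
    apply LinearMap.ext; intro h
    rw [hQev h, hu, ev_target α bH 1 f1 h, one_mul]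
    rfl
  have DB : ∀ x : A, x = ∑ j : Fin n, aa j * α.act t (bb j * x) := by
    intro x
    have step0 : ∑ j : Fin n, aa j * α.act t (bb j * x)
        = LinearMap.mul' k A (TensorProduct.map Q (α.act.flip x) (Coalgebra.comul t)) := by
      calc ∑ j : Fin n, aa j * α.act t (bb j * x)
          = ∑ j : Fin n, aa j * (LinearMap.mul' k A (TensorProduct.map (α.act.flip (bb j))
              (α.act.flip x) (Coalgebra.comul t))) :=
            Finset.sum_congr rfl fun j _ => by rw [α.act_mul t (bb j) x]
        _ = LinearMap.mul' k A (TensorProduct.map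
              (∑ j : Fin n, (LinearMap.mulLeft k (aa j)) ∘ₗ (α.act.flip (bb j)))
              (α.act.flip x) (Coalgebra.comul t)) :=
            sum_mul_expand α aa bb (α.act.flip x) _
        _ = LinearMap.mul' k A (TensorProduct.map Q (α.act.flip x) (Coalgebra.comul t)) := by
            rw [← hQdef]
    rw [step0, hQR]
    have c1 : TensorProduct.map (L ∘ₗ (Coalgebra.comul (R := k) (A := H))) (α.act.flip x)
        = (TensorProduct.map L (α.act.flip x)) ∘ₗ
          (TensorProduct.map (Coalgebra.comul (R := k) (A := H)) LinearMap.id) := by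
      have h1 := TensorProduct.map_comp L (α.act.flip x)
        (Coalgebra.comul (R := k) (A := H)) (LinearMap.id (R := k) (M := H))
      rw [LinearMap.comp_id] at h1
      exact h1
    rw [c1, LinearMap.comp_apply]
    have hco : TensorProduct.map (Coalgebra.comul (R := k) (A := H)) LinearMap.id
        (Coalgebra.comul t)
        = (TensorProduct.assoc k H H H).symm
            (LinearMap.lTensor H Coalgebra.comul (Coalgebra.comul t)) := by
      rw [show TensorProduct.map (Coalgebra.comul (R := k) (A := H)) LinearMap.id
        = LinearMap.rTensor H Coalgebra.comul from rfl]
      exact (Coalgebra.coassoc_symm_apply t).symm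
    rw [hco]
    have ASSOC : ∀ ζ : H ⊗[k] (H ⊗[k] H),
        LinearMap.mul' k A (TensorProduct.map L (α.act.flip x)
          ((TensorProduct.assoc k H H H).symm ζ))
        = (TensorProduct.lid k A) (TensorProduct.map f1
            ((LinearMap.mul' k A) ∘ₗ TensorProduct.map (α.act.flip 1) (α.act.flip x)) ζ) := by
      intro ζ
      induction ζ using TensorProduct.induction_on with
      | zero => simp
      | tmul uu ww =>
          induction ww using TensorProduct.induction_on with
          | zero => simp [TensorProduct.tmul_zero]
          | tmul v v' =>
              simp only [TensorProduct.assoc_symm_tmul, TensorProduct.map_tmul, hL,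
                LinearMap.comp_apply, LinearMap.mul'_apply, LinearEquiv.coe_coe,
                TensorProduct.lid_tmul, LinearMap.flip_apply]
              rw [smul_mul_assoc]
          | add w₁ w₂ hw₁ hw₂ =>
              simp only [TensorProduct.tmul_add, map_add]
              rw [hw₁, hw₂]
      | add ζ₁ ζ₂ h₁ h₂ =>
          simp only [map_add]
          rw [h₁, h₂]
    rw [ASSOC]
    have c2 : TensorProduct.map f1
        ((LinearMap.mul' k A) ∘ₗ TensorProduct.map (α.act.flip 1) (α.act.flip x))
        (LinearMap.lTensor H Coalgebra.comul (Coalgebra.comul t))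
        = TensorProduct.map f1 (((LinearMap.mul' k A) ∘ₗ
            TensorProduct.map (α.act.flip 1) (α.act.flip x)) ∘ₗ Coalgebra.comul)
          (Coalgebra.comul t) := by
      have h1 := TensorProduct.map_comp f1
        ((LinearMap.mul' k A) ∘ₗ TensorProduct.map (α.act.flip 1) (α.act.flip x))
        (LinearMap.id (R := k) (M := H)) (Coalgebra.comul (R := k) (A := H))
      rw [LinearMap.comp_id] at h1
      rw [h1]
      rfl
    rw [c2]
    have c3 : ((LinearMap.mul' k A) ∘ₗ
        TensorProduct.map (α.act.flip 1) (α.act.flip x)) ∘ₗ Coalgebra.comul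
        = α.act.flip x := by
      apply LinearMap.ext; intro v
      simp only [LinearMap.comp_apply, LinearMap.flip_apply]
      exact (act_one_expand α v x).symm
    rw [c3, lid_map_move' f1 (α.act.flip x) (Coalgebra.comul t), hf1]
    exact (α.one_act x).symm
  have bullet1 : ∀ (j : Fin n) (x : A) (h : H),
      α.act h (α.act t (bb j * x)) = (α.act t (bb j * x)) * α.act h 1 :=
    fun j x h2 => trace_invariant α hsymm t hint (bb j * x) h2
  have bullet2 : ∀ (j : Fin n) (x c : A), (∀ h : H, α.act h c = c * α.act h 1) →
      α.act t (bb j * (x * c)) = (α.act t (bb j * x)) * c := by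
    intro j x c hc
    rw [← mul_assoc]
    exact trace_Blinear α hcentral t hc (bb j * x)
  have hkerle : LinearMap.ker (canMap α bH) ≤ balancedRel α := by
    intro w hw
    obtain ⟨sw, hsw⟩ := TensorProduct.exists_finset w
    have hF : ∀ h : H, ∑ p ∈ sw, p.1 * α.act h p.2 = 0 := by
      intro h
      have h0 : evmap (canMap α bH w) h = 0 := by
        rw [LinearMap.mem_ker.mp hw]
        simp
      rw [hsw, map_sum, map_sum, LinearMap.sum_apply] at h0
      rw [← h0]
      exact Finset.sum_congr rfl fun p _ => (ev_can α bH p.1 p.2 h).symm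
    have hW : ∀ j : Fin n, ∑ p ∈ sw, α.act t (bb j * p.1) * p.2 = 0 := by
      intro j
      have hM : (∑ p ∈ sw, (LinearMap.mulLeft k (bb j * p.1)) ∘ₗ (α.act.flip p.2))
          = (0 : H →ₗ[k] A) := by
        apply LinearMap.ext; intro h
        simp only [LinearMap.sum_apply, LinearMap.comp_apply, LinearMap.mulLeft_apply,
          LinearMap.flip_apply, LinearMap.zero_apply]
        calc ∑ p ∈ sw, (bb j * p.1) * α.act h p.2
            = bb j * ∑ p ∈ sw, p.1 * α.act h p.2 := by
              rw [Finset.mul_sum]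
              exact Finset.sum_congr rfl fun p _ => mul_assoc _ _ _
          _ = 0 := by rw [hF h, mul_zero]
      exact act_mul_expand_sum α sw (fun p => bb j * p.1) (fun p => p.2) t hM
    have hA1 : ∑ p ∈ sw, ∑ j : Fin n, (aa j * α.act t (bb j * p.1)) ⊗ₜ[k] p.2 = w := by
      rw [hsw]
      refine Finset.sum_congr rfl fun p _ => ?_
      rw [← TensorProduct.sum_tmul, ← DB p.1]
    have hA2 : ∑ p ∈ sw, ∑ j : Fin n, aa j ⊗ₜ[k] (α.act t (bb j * p.1) * p.2) = 0 := by
      rw [Finset.sum_comm]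
      refine Finset.sum_eq_zero fun j _ => ?_
      rw [← TensorProduct.tmul_sum, hW j, TensorProduct.tmul_zero]
    have hw3 : w = ∑ p ∈ sw, ∑ j : Fin n,
        ((aa j * α.act t (bb j * p.1)) ⊗ₜ[k] p.2
          - aa j ⊗ₜ[k] (α.act t (bb j * p.1) * p.2)) := by
      have hsplit : ∑ p ∈ sw, ∑ j : Fin n,
          ((aa j * α.act t (bb j * p.1)) ⊗ₜ[k] p.2
            - aa j ⊗ₜ[k] (α.act t (bb j * p.1) * p.2))
          = (∑ p ∈ sw, ∑ j : Fin n, (aa j * α.act t (bb j * p.1)) ⊗ₜ[k] p.2)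
            - ∑ p ∈ sw, ∑ j : Fin n, aa j ⊗ₜ[k] (α.act t (bb j * p.1) * p.2) := by
        rw [← Finset.sum_sub_distrib]
        exact Finset.sum_congr rfl fun p _ => by rw [← Finset.sum_sub_distrib]
      rw [hsplit, hA1, hA2, sub_zero]
    rw [hw3]
    exact Submodule.sum_mem _ fun p _ => Submodule.sum_mem _ fun j _ =>
      Submodule.subset_span ⟨aa j, p.2, α.act t (bb j * p.1),
        fun h => bullet1 j p.1 h, rfl⟩
  have hkerge : balancedRel α ≤ LinearMap.ker (canMap α bH) := by
    refine Submodule.span_le.mpr ?_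
    rintro x ⟨a, b, c, hc, rfl⟩
    simp only [SetLike.mem_coe, LinearMap.mem_ker, map_sub]
    rw [sub_eq_zero]
    refine evmap_inj bH fun h => ?_
    rw [ev_can, ev_can, act_invariant_mul α hc b h, mul_assoc]
  have hrange : LinearMap.range (canMap α bH) = Submodule.span k (galoisTarget α bH) := by
    refine le_antisymm ?_ hsurj
    rintro _ ⟨w, rfl⟩
    induction w using TensorProduct.induction_on with
    | zero =>
        rw [map_zero]
        exact Submodule.zero_mem _
    | tmul x y =>
        have key : canMap α bH (x ⊗ₜ[k] y) = ∑ i : ι, ∑ j : ι,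
            ((x * α.act (bH i) y) * α.act (bH j) 1) ⊗ₜ[k]
              conv (bH.coord i) (bH.coord j) := by
          refine evmap_inj bH fun h => ?_
          rw [ev_can α bH x y h, map_sum, LinearMap.sum_apply]
          rw [Finset.sum_congr rfl fun i _ =>
            ev_target α bH (x * α.act (bH i) y) (bH.coord i) h]
          rw [← sum_act_lid α bH y h, Finset.mul_sum]
          exact Finset.sum_congr rfl fun i _ => (mul_assoc _ _ _).symm
        rw [key]
        exact Submodule.sum_mem _ fun i _ =>
          Submodule.subset_span ⟨x * α.act (bH i) y, bH.coord i, rfl⟩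
    | add w₁ w₂ h₁ h₂ =>
        rw [map_add]
        exact Submodule.add_mem _ h₁ h₂
  exact ⟨⟨n, aa, bb, bullet1, bullet2, DB⟩, le_antisymm hkerle hkerge, hrange⟩
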